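/- Let S[1..n] be a string, 0 < τ ≤ 1, 1 ≤ i ≤ j ≤ n, and b = ⌊log₂(j − i + 1)⌋. If a is a τ-majority of S[i..j], then for every position k with i ≤ k ≤ j, a occurs at least τ·2^b times in the range S[max(1, k − 2^{b+1})..min(n, k + 2^{b+1})]. -/
import Mathlib


/-- `occ S a i j` is the number of positions `k` with `i ≤ k ≤ j` and `S k = a`. -/
def occ {α : Type*} [DecidableEq α] (S : ℕ → α) (a : α) (i j : ℕ) : ℕ :=
  ((Finset.Icc i j).filter (fun k => S k = a)).card

/-- If `a` is a τ-majority of `S[i..j]`, then with `b = ⌊log₂(j - i + 1)⌋`, for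
every `k ∈ [i, j]` the symbol `a` occurs at least `τ·2^b` times in
`S[max(1, k - 2^{b+1})..min(n, k + 2^{b+1})]`. -/
theorem stmt_11 {α : Type*} [DecidableEq α] (S : ℕ → α) (n : ℕ) (τ : ℝ)
    (hτ0 : 0 < τ) (hτ1 : τ ≤ 1) (i j : ℕ)
    (hi : 1 ≤ i) (hij : i ≤ j) (hjn : j ≤ n) (a : α)
    (hocc : ∃ k, i ≤ k ∧ k ≤ j ∧ S k = a)
    (hmaj : (occ S a i j : ℝ) ≥ τ * ((j : ℝ) - (i : ℝ) + 1)) :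
    ∀ k, i ≤ k → k ≤ j →
      (occ S a (max 1 (k - 2 ^ (Nat.log 2 (j - i + 1) + 1)))
          (min n (k + 2 ^ (Nat.log 2 (j - i + 1) + 1))) : ℝ)
        ≥ τ * 2 ^ (Nat.log 2 (j - i + 1)) := by
  intro k hik hkj
  set b := Nat.log 2 (j - i + 1) with hb
  have h1 : 2 ^ b ≤ j - i + 1 := Nat.pow_log_le_self 2 (by omega)
  have h2 : j - i + 1 < 2 ^ (b + 1) := Nat.lt_pow_succ_log_self (by norm_num) _
  have hmono : occ S a i j ≤
      occ S a (max 1 (k - 2 ^ (b + 1))) (min n (k + 2 ^ (b + 1))) := by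
    apply Finset.card_le_card
    apply Finset.filter_subset_filter
    apply Finset.Icc_subset_Icc <;> omega
  have hcast : ((j : ℝ) - (i : ℝ) + 1) = ((j - i + 1 : ℕ) : ℝ) := by
    push_cast [Nat.cast_sub hij]; ring
  calc τ * 2 ^ b ≤ τ * ((j - i + 1 : ℕ) : ℝ) := by
        apply mul_le_mul_of_nonneg_left _ hτ0.le
        exact_mod_cast h1
    _ ≤ (occ S a i j : ℝ) := by rw [← hcast]; exact hmaj
    _ ≤ _ := by exact_mod_cast hmono
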